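/- arXiv:2605.19330 — 3 statements merged into one kernel-verified Lean document; each statement's English description precedes it below -/
import Mathlib

section
/- (Chebyshev completeness, Proposition 1, finite-set version.) Let M ≥ 1 and let S ⊆ [0,1]^M be a finite set. If x ∈ S is Pareto-optimal in S and satisfies x_j < 1 for all j, then there exists a weight vector w in the simplex Δ^{M−1} with w_j > 0 for all j such that x minimizes the Chebyshev scalarization over S: s_w(x) ≤ s_w(y) for all y ∈ S. In particular, every such Pareto-optimal point — including those in non-convex regions of the front — is reachable by Chebyshev scalarization. -/
/-- `y` Pareto-dominates `x`: `y_j ≥ x_j` for all `j` and `y_j > x_j` for some `j`. -/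
def Dominates {M : ℕ} (y x : Fin M → ℝ) : Prop :=
  (∀ j, x j ≤ y j) ∧ ∃ j, x j < y j

/-- Chebyshev scalarization with ideal point `z* = (1,…,1)`:
`s_w(x) = max_j w_j * (1 - x_j)` (lower is better). -/
noncomputable def cheb {M : ℕ} (hM : 1 ≤ M) (w x : Fin M → ℝ) : ℝ :=
  Finset.univ.sup' (Finset.univ_nonempty_iff.mpr (Fin.pos_iff_nonempty.mp hM))
    (fun j => w j * (1 - x j))

/-- Chebyshev completeness (finite-set version): any Pareto-optimal `x ∈ S ⊆ [0,1]^M`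
with `x_j < 1` for all `j` minimizes the Chebyshev scalarization over `S`
for some weight vector `w` in the simplex with strictly positive entries. -/
theorem cheb_completeness (M : ℕ) (hM : 1 ≤ M)
    (S : Finset (Fin M → ℝ)) (hSbox : ∀ z ∈ S, ∀ j, z j ∈ Set.Icc (0 : ℝ) 1)
    (x : Fin M → ℝ) (hx : x ∈ S)
    (hxlt : ∀ j, x j < 1)
    (hpareto : ∀ y ∈ S, ¬ Dominates y x) :
    ∃ w : Fin M → ℝ, (∀ j, 0 < w j) ∧ (∑ j, w j = 1) ∧
      ∀ y ∈ S, cheb hM w x ≤ cheb hM w y := by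
  have hne : (Finset.univ : Finset (Fin M)).Nonempty :=
    Finset.univ_nonempty_iff.mpr (Fin.pos_iff_nonempty.mp hM)
  have hpos : ∀ j, (0:ℝ) < (1 - x j)⁻¹ := fun j =>
    inv_pos.mpr (by linarith [hxlt j])
  set T : ℝ := ∑ j, (1 - x j)⁻¹ with hT
  have hTpos : 0 < T := Finset.sum_pos (fun j _ => hpos j) hne
  refine ⟨fun j => (1 - x j)⁻¹ / T, fun j => div_pos (hpos j) hTpos, ?_, ?_⟩
  · rw [← Finset.sum_div, ← hT, div_self hTpos.ne']
  · have hwx : ∀ j, (1 - x j)⁻¹ / T * (1 - x j) = 1 / T := by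
      intro j
      field_simp
      exact div_self (by linarith [hxlt j])
    have hcx : cheb hM (fun j => (1 - x j)⁻¹ / T) x = 1 / T := by
      unfold cheb
      apply le_antisymm
      · exact Finset.sup'_le _ _ fun j _ => le_of_eq (hwx j)
      · exact le_trans (le_of_eq (hwx hne.choose).symm)
          (Finset.le_sup' (fun j => (1 - x j)⁻¹ / T * (1 - x j)) (Finset.mem_univ hne.choose))
    intro y hy
    rw [hcx]
    by_contra hlt
    push_neg at hlt
    have hall : ∀ j, x j < y j := by
      intro j
      have h1 : (1 - x j)⁻¹ / T * (1 - y j) < 1 / T := by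
        refine lt_of_le_of_lt ?_ hlt
        unfold cheb
        exact Finset.le_sup' (fun j => (1 - x j)⁻¹ / T * (1 - y j)) (Finset.mem_univ j)
      rw [← hwx j] at h1
      have h2 : (1 - y j) < (1 - x j) :=
        lt_of_mul_lt_mul_left h1 (div_pos (hpos j) hTpos).le
      linarith
    exact hpareto y hy ⟨fun j => (hall j).le, hne.choose, hall hne.choose⟩
end

section
/- Let M ≥ 1, let S ⊆ [0,∞)^M be a finite set, and let x ∈ ℝ^M satisfy x_j > 0 for all j. Then HVC(x,S) > 0 if and only if x is not weakly dominated by any member of S, i.e., there is no y ∈ S with y_j ≥ x_j for all j. -/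
/-- Hypervolume with reference point at the origin: the Lebesgue measure of the
union of axis-aligned boxes `∏_j [0, x_j]` over `x ∈ S`. -/
noncomputable def HV {M : ℕ} (S : Set (Fin M → ℝ)) : ℝ :=
  (MeasureTheory.volume (⋃ x ∈ S, Set.Icc (0 : Fin M → ℝ) x)).toReal

/-- Hypervolume contribution of `x` to `S`: `HVC(x,S) = HV(S ∪ {x}) − HV(S)`. -/
noncomputable def HVC {M : ℕ} (x : Fin M → ℝ) (S : Set (Fin M → ℝ)) : ℝ :=
  HV (insert x S) - HV S

/-- For `x` with strictly positive coordinates, `HVC(x,S) > 0` iff `x` is not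
weakly dominated by any member of `S`. -/
theorem HVC_pos_iff_not_weakly_dominated (M : ℕ) (hM : 1 ≤ M)
    (S : Set (Fin M → ℝ)) (hS : S.Finite) (hSpos : ∀ y ∈ S, ∀ j, 0 ≤ y j)
    (x : Fin M → ℝ) (hx : ∀ j, 0 < x j) :
    0 < HVC x S ↔ ¬ ∃ y ∈ S, ∀ j, x j ≤ y j := by
  classical
  set A := Set.Icc (0 : Fin M → ℝ) x with hA
  set U := ⋃ y ∈ S, Set.Icc (0 : Fin M → ℝ) y with hU
  have hUm : MeasurableSet U := hS.measurableSet_biUnion (fun y _ => measurableSet_Icc)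
  have hAm : MeasurableSet A := measurableSet_Icc
  have hUlt : MeasureTheory.volume U < ⊤ :=
    MeasureTheory.measure_biUnion_lt_top hS (fun y _ => isCompact_Icc.measure_lt_top)
  have hAlt : MeasureTheory.volume A < ⊤ := isCompact_Icc.measure_lt_top
  have hins : (⋃ y ∈ insert x S, Set.Icc (0 : Fin M → ℝ) y) = U ∪ (A \ U) := by
    rw [Set.biUnion_insert, Set.union_comm, Set.union_diff_self]
  have hDlt : MeasureTheory.volume (A \ U) < ⊤ :=
    (MeasureTheory.measure_mono Set.diff_subset).trans_lt hAlt
  have hHVC : HVC x S = (MeasureTheory.volume (A \ U)).toReal := by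
    unfold HVC HV
    rw [hins, MeasureTheory.measure_union Set.disjoint_sdiff_right (hAm.diff hUm),
      ENNReal.toReal_add hUlt.ne hDlt.ne]
    ring
  rw [hHVC]
  constructor
  · -- positive contribution → not dominated
    intro hpos hdom
    obtain ⟨y, hyS, hxy⟩ := hdom
    have hsub : A ⊆ U := by
      intro z hz
      exact Set.mem_biUnion hyS ⟨hz.1, le_trans hz.2 (by intro j; exact hxy j)⟩
    rw [Set.diff_eq_empty.mpr hsub] at hpos
    simp at hpos
  · -- not dominated → positive contribution
    intro hnd
    have hkey : ∀ y ∈ S, ∃ j, y j < x j := by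
      intro y hyS
      by_contra h
      push_neg at h
      exact hnd ⟨y, hyS, fun j => h j⟩
    -- build c j < x j dominating all relevant y j
    set F : Fin M → Finset ℝ := fun j =>
      insert (x j / 2) ((hS.toFinset.image (fun y => y j)).filter (fun t => t < x j)) with hF
    have hFne : ∀ j, (F j).Nonempty := fun j => ⟨_, Finset.mem_insert_self _ _⟩
    set c : Fin M → ℝ := fun j => (F j).max' (hFne j) with hc
    have hcx : ∀ j, c j < x j := by
      intro j
      rw [hc]
      rw [Finset.max'_lt_iff]
      intro b hb
      rcases Finset.mem_insert.mp hb with h | h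
      · rw [h]; linarith [hx j]
      · exact (Finset.mem_filter.mp h).2
    have hc0 : ∀ j, 0 < c j := by
      intro j
      have : x j / 2 ≤ c j := Finset.le_max' _ _ (Finset.mem_insert_self _ _)
      linarith [hx j]
    have hcy : ∀ y ∈ S, ∀ j, y j < x j → y j ≤ c j := by
      intro y hyS j hyx
      apply Finset.le_max'
      apply Finset.mem_insert_of_mem
      exact Finset.mem_filter.mpr ⟨Finset.mem_image.mpr ⟨y, hS.mem_toFinset.mpr hyS, rfl⟩, hyx⟩
    set B := Set.pi Set.univ (fun j => Set.Ioc (c j) (x j)) with hB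
    have hBsub : B ⊆ A \ U := by
      intro z hz
      rw [Set.mem_pi] at hz
      constructor
      · constructor
        · intro j; exact le_of_lt (lt_trans (hc0 j) (hz j (Set.mem_univ j)).1)
        · intro j; exact (hz j (Set.mem_univ j)).2
      · intro hzU
        rw [Set.mem_iUnion₂] at hzU
        obtain ⟨y, hyS, hzy⟩ := hzU
        obtain ⟨j, hj⟩ := hkey y hyS
        have h1 : z j ≤ y j := hzy.2 j
        have h2 : c j < z j := (hz j (Set.mem_univ j)).1
        have h3 : y j ≤ c j := hcy y hyS j hj
        linarith
    have hBvol : 0 < MeasureTheory.volume B := by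
      rw [hB, MeasureTheory.volume_pi_pi]
      apply CanonicallyOrderedAdd.prod_pos.mpr
      intro j _
      rw [Real.volume_Ioc]
      exact ENNReal.ofReal_pos.mpr (by linarith [hcx j])
    have : 0 < MeasureTheory.volume (A \ U) :=
      lt_of_lt_of_le hBvol (MeasureTheory.measure_mono hBsub)
    exact ENNReal.toReal_pos this.ne' hDlt.ne
end

section
/- (Strict monotonicity of the hypervolume indicator.) Let M ≥ 1 and let S, S' ⊆ [0,∞)^M be finite sets such that (i) every x ∈ S is weakly dominated by some x' ∈ S', and (ii) there exists x' ∈ S' with x'_j > 0 for all j that is not weakly dominated by any x ∈ S. Then HV(S') > HV(S). -/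
/-- Strict monotonicity of the hypervolume indicator: if every point of `S` is
weakly dominated by some point of `S'`, and `S'` contains a strictly positive
point not weakly dominated by any point of `S`, then `HV(S') > HV(S)`. -/
theorem HV_strict_monotone (M : ℕ) (hM : 1 ≤ M) (S S' : Set (Fin M → ℝ))
    (hS : S.Finite) (hS' : S'.Finite)
    (hSpos : ∀ x ∈ S, ∀ j, 0 ≤ x j) (hS'pos : ∀ x ∈ S', ∀ j, 0 ≤ x j)
    (hdom : ∀ x ∈ S, ∃ x' ∈ S', ∀ j, x j ≤ x' j)
    (hstrict : ∃ x' ∈ S', (∀ j, 0 < x' j) ∧ ¬ ∃ x ∈ S, ∀ j, x' j ≤ x j) :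
    HV S < HV S' := by
  classical
  obtain ⟨x', hx'S', hx'pos, hnd⟩ := hstrict
  set U : Set (Fin M → ℝ) := ⋃ x ∈ S, Set.Icc 0 x with hU
  set U' : Set (Fin M → ℝ) := ⋃ x ∈ S', Set.Icc 0 x with hU'
  -- U ⊆ U'
  have hUU' : U ⊆ U' := by
    intro y hy
    simp only [hU, Set.mem_iUnion, Set.mem_Icc] at hy
    obtain ⟨x, hxS, hy0, hyx⟩ := hy
    obtain ⟨z, hzS', hxz⟩ := hdom x hxS
    exact Set.mem_biUnion hzS' (Set.mem_Icc.2 ⟨hy0, le_trans hyx hxz⟩)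
  -- for each x in S, pick a coordinate where x' beats x
  have hexj : ∀ x ∈ S, ∃ j, x j < x' j := by
    intro x hx
    by_contra h
    push_neg at h
    exact hnd ⟨x, hx, h⟩
  -- the ratio function
  let r : (Fin M → ℝ) → ℝ := fun x =>
    if h : ∃ j, x j < x' j then x h.choose / x' h.choose else 0
  have hr_lt : ∀ x ∈ S, r x < 1 := by
    intro x hx
    have h := hexj x hx
    simp only [r, dif_pos h]
    exact (div_lt_one (hx'pos h.choose)).2 h.choose_spec
  -- θ
  let T : Finset ℝ := insert (1/2 : ℝ) (hS.toFinset.image r)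
  have hTne : T.Nonempty := ⟨1/2, Finset.mem_insert_self _ _⟩
  set θ : ℝ := T.max' hTne with hθ
  have hθ_lt1 : θ < 1 := by
    apply Finset.max'_lt_iff T hTne |>.2
    intro a ha
    rcases Finset.mem_insert.1 ha with h | h
    · rw [h]; norm_num
    · obtain ⟨x, hx, rfl⟩ := Finset.mem_image.1 h
      exact hr_lt x (hS.mem_toFinset.1 hx)
  have hθ_nonneg : (0:ℝ) ≤ θ := le_trans (by norm_num) (Finset.le_max' T (1/2) (Finset.mem_insert_self _ _))
  have hθ_ge : ∀ x ∈ S, r x ≤ θ := fun x hx =>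
    Finset.le_max' T (r x) (Finset.mem_insert_of_mem (Finset.mem_image_of_mem r (hS.mem_toFinset.2 hx)))
  -- the box B
  set B : Set (Fin M → ℝ) := Set.pi Set.univ (fun j => Set.Ioc (θ * x' j) (x' j)) with hB
  have hBsub : B ⊆ U' := by
    intro y hy
    simp only [hB, Set.mem_pi, Set.mem_univ, forall_true_left, Set.mem_Ioc] at hy
    simp only [hU', Set.mem_iUnion]
    refine ⟨x', hx'S', fun j => ?_, fun j => (hy j).2⟩
    exact le_of_lt (lt_of_le_of_lt (mul_nonneg hθ_nonneg (hx'pos j).le) (hy j).1)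
  have hBdisj : Disjoint U B := by
    rw [Set.disjoint_left]
    intro y hyU hyB
    simp only [hU, Set.mem_iUnion] at hyU
    obtain ⟨x, hxS, _, hyx⟩ := hyU
    have h := hexj x hxS
    obtain ⟨j, hj⟩ := h
    -- use the chosen coordinate
    have hch := (hexj x hxS).choose_spec
    set k := (hexj x hxS).choose
    have hrx : r x = x k / x' k := by simp only [r, dif_pos (hexj x hxS)]; rfl
    simp only [hB, Set.mem_pi, Set.mem_univ, forall_true_left, Set.mem_Ioc] at hyB
    have h1 : x k ≤ θ * x' k := by
      have := hθ_ge x hxS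
      rw [hrx] at this
      calc x k = (x k / x' k) * x' k := (div_mul_cancel₀ _ (hx'pos k).ne').symm
        _ ≤ θ * x' k := mul_le_mul_of_nonneg_right this (hx'pos k).le
    have h2 : θ * x' k < y k := (hyB k).1
    have h3 : y k ≤ x k := hyx k
    linarith
  -- measurability and finiteness
  have hUmeas : MeasurableSet U :=
    hS.measurableSet_biUnion (fun x _ => measurableSet_Icc)
  have hBmeas : MeasurableSet B :=
    MeasurableSet.univ_pi (fun j => measurableSet_Ioc)
  have hUfin : MeasureTheory.volume U < ⊤ :=
    MeasureTheory.measure_biUnion_lt_top hS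
      (fun x _ => isCompact_Icc.measure_lt_top)
  have hU'fin : MeasureTheory.volume U' < ⊤ :=
    MeasureTheory.measure_biUnion_lt_top hS'
      (fun x _ => isCompact_Icc.measure_lt_top)
  have hBpos : 0 < MeasureTheory.volume B := by
    rw [hB, Real.volume_pi_Ioc]
    apply CanonicallyOrderedAdd.prod_pos.2
    intro j _
    rw [ENNReal.ofReal_pos]
    nlinarith [hx'pos j]
  have key : MeasureTheory.volume U < MeasureTheory.volume U' := by
    calc MeasureTheory.volume U
        < MeasureTheory.volume U + MeasureTheory.volume B :=
          ENNReal.lt_add_right hUfin.ne hBpos.ne'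
      _ = MeasureTheory.volume (U ∪ B) :=
          (MeasureTheory.measure_union hBdisj hBmeas).symm
      _ ≤ MeasureTheory.volume U' :=
          MeasureTheory.measure_mono (Set.union_subset hUU' hBsub)
  exact ENNReal.toReal_lt_toReal hUfin.ne hU'fin.ne |>.2 key
end
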